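/- Let $e_1, e_2, e_3, e_4 : [r_b, L] \to \mathbb{R}$ be continuous with $e_1 < 0$ everywhere, and let $b : [r_b,L] \to (0,\infty)$ be $C^2$. Suppose $p : [r_b, L] \to \mathbb{R}$ is $C^2$, satisfies $p(r_b) = 0$, $p(L) = 0$, the boundary relation $p'(r_b) + \kappa\, p(r_b) = 0$ for some constant $\kappa$, and the nonlocal equation $e_1 p'' + e_2 p' + e_3 p + e_4(y^0)\int_{r_b}^{y^0} b(\tau) p(\tau)\, d\tau + e_5(y^0) p(r_b) = 0$ on $[r_b,L]$ for some continuous $e_5$. Then $p \equiv 0$ on $[r_b, L]$. -/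

import Mathlib

set_option maxHeartbeats 1000000 in
/-- Uniqueness for the nonlocal two-point boundary value problem: a `C²` solution
with vanishing boundary trace at `r_b` and `L` and Venttsel-type boundary relation
must vanish identically. -/
theorem stmt_7 (rb L : ℝ) (hrbL : rb < L)
    (e1 e2 e3 e4 e5 b : ℝ → ℝ)
    (he1 : ContinuousOn e1 (Set.Icc rb L)) (he1neg : ∀ x ∈ Set.Icc rb L, e1 x < 0)
    (he2 : ContinuousOn e2 (Set.Icc rb L)) (he3 : ContinuousOn e3 (Set.Icc rb L))
    (he4 : ContinuousOn e4 (Set.Icc rb L)) (he5 : ContinuousOn e5 (Set.Icc rb L))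
    (hbC2 : ContDiffOn ℝ 2 b (Set.Icc rb L)) (hbpos : ∀ x ∈ Set.Icc rb L, 0 < b x)
    (p p' p'' : ℝ → ℝ)
    (hp' : ∀ x ∈ Set.Icc rb L, HasDerivAt p (p' x) x)
    (hp'' : ∀ x ∈ Set.Icc rb L, HasDerivAt p' (p'' x) x)
    (hp''cont : ContinuousOn p'' (Set.Icc rb L))
    (κ : ℝ)
    (hbd0 : p rb = 0) (hbdL : p L = 0)
    (hbdrel : p' rb + κ * p rb = 0)
    (heq : ∀ x ∈ Set.Icc rb L,
      e1 x * p'' x + e2 x * p' x + e3 x * p x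
        + e4 x * (∫ τ in rb..x, b τ * p τ) + e5 x * p rb = 0) :
    ∀ x ∈ Set.Icc rb L, p x = 0 := by
  set I : Set ℝ := Set.Icc rb L with hI
  have hIne : I.Nonempty := Set.nonempty_Icc.2 hrbL.le
  have hIcpt : IsCompact I := isCompact_Icc
  -- continuity of p, p'
  have hpcont : ContinuousOn p I := fun x hx => ((hp' x hx).continuousAt).continuousWithinAt
  have hp'cont : ContinuousOn p' I := fun x hx => ((hp'' x hx).continuousAt).continuousWithinAt
  have hbcont : ContinuousOn b I := hbC2.continuousOn
  -- the integrand
  set g : ℝ → ℝ := fun τ => b τ * p τ with hg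
  have hgcont : ContinuousOn g I := hbcont.mul hpcont
  -- the primitive
  set P : ℝ → ℝ := fun t => ∫ τ in rb..t, g τ with hPdef
  have huIcc : Set.uIcc rb L = I := by
    rw [Set.uIcc_of_le hrbL.le]
  have hPcont : ContinuousOn P I := by
    have := intervalIntegral.continuousOn_primitive_interval (a := rb) (b := L) (μ := MeasureTheory.volume)
      (f := g) (by rw [huIcc]; exact hgcont.integrableOn_compact hIcpt)
    rwa [huIcc] at this
  -- derivative of P within Ici t for t ∈ Ico rb L
  have hPderiv : ∀ t ∈ Set.Ico rb L, HasDerivWithinAt P (g t) (Set.Ici t) t := by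
    intro t ht
    have htI : t ∈ I := ⟨ht.1, ht.2.le⟩
    have hint : IntervalIntegrable g MeasureTheory.volume rb t := by
      apply ContinuousOn.intervalIntegrable
      apply hgcont.mono
      rw [Set.uIcc_of_le ht.1]
      exact Set.Icc_subset_Icc le_rfl ht.2.le
    have hmem : I ∈ nhdsWithin t (Set.Ioi t) := by
      have : Set.Ioi t ∩ Set.Iio L ⊆ I := fun y hy => ⟨le_trans ht.1 hy.1.le, hy.2.le⟩
      exact Filter.mem_of_superset
        (inter_mem_nhdsWithin _ (Iio_mem_nhds ht.2)) this
    have hmeas : StronglyMeasurableAtFilter g (nhdsWithin t (Set.Ioi t)) :=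
      ⟨I, hmem, (hgcont.aestronglyMeasurable measurableSet_Icc)⟩
    have hcw : ContinuousWithinAt g (Set.Ioi t) t :=
      (hgcont t htI).mono_of_mem_nhdsWithin hmem
    exact intervalIntegral.integral_hasDerivWithinAt_right hint hmeas hcw
  -- lower bound on -e1
  obtain ⟨x0, hx0I, hx0min⟩ := hIcpt.exists_isMinOn hIne he1.neg
  set m : ℝ := -e1 x0 with hm
  have hmpos : 0 < m := by simpa [hm] using he1neg x0 hx0I
  have hme1 : ∀ x ∈ I, m ≤ -e1 x := fun x hx => hx0min hx
  -- upper bounds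
  obtain ⟨B2, hB2⟩ := hIcpt.exists_bound_of_continuousOn he2
  obtain ⟨B3, hB3⟩ := hIcpt.exists_bound_of_continuousOn he3
  obtain ⟨B4, hB4⟩ := hIcpt.exists_bound_of_continuousOn he4
  obtain ⟨Bb, hBb⟩ := hIcpt.exists_bound_of_continuousOn hbcont
  have hB2n : 0 ≤ B2 := le_trans (norm_nonneg _) (hB2 rb (Set.left_mem_Icc.2 hrbL.le))
  have hB3n : 0 ≤ B3 := le_trans (norm_nonneg _) (hB3 rb (Set.left_mem_Icc.2 hrbL.le))
  have hB4n : 0 ≤ B4 := le_trans (norm_nonneg _) (hB4 rb (Set.left_mem_Icc.2 hrbL.le))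
  have hBbn : 0 ≤ Bb := le_trans (norm_nonneg _) (hBb rb (Set.left_mem_Icc.2 hrbL.le))
  set K : ℝ := (B2 + B3 + B4) / m + Bb + 1 with hK
  -- the system
  set f : ℝ → ℝ × ℝ × ℝ := fun t => (p t, p' t, P t) with hf
  set f' : ℝ → ℝ × ℝ × ℝ := fun t => (p' t, p'' t, g t) with hf'
  have hfcont : ContinuousOn f I := hpcont.prodMk (hp'cont.prodMk hPcont)
  have hfderiv : ∀ t ∈ Set.Ico rb L, HasDerivWithinAt f (f' t) (Set.Ici t) t := by
    intro t ht
    have htI : t ∈ I := ⟨ht.1, ht.2.le⟩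
    exact ((hp' t htI).hasDerivWithinAt).prodMk
      (((hp'' t htI).hasDerivWithinAt).prodMk (hPderiv t ht))
  have hfa : ‖f rb‖ ≤ 0 := by
    have h1 : p' rb = 0 := by
      have := hbdrel; rw [hbd0] at this; linarith
    have h2 : P rb = 0 := by simp [hPdef]
    simp [hf, hbd0, h1, h2, Prod.norm_def]
  have hbound : ∀ t ∈ Set.Ico rb L, ‖f' t‖ ≤ K * ‖f t‖ + 0 := by
    intro t ht
    have htI : t ∈ I := ⟨ht.1, ht.2.le⟩
    set N : ℝ := ‖f t‖ with hN
    have hNn : 0 ≤ N := norm_nonneg _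
    have hNeq : N = max |p t| (max |p' t| |P t|) := by
      simp [hN, hf, Prod.norm_def, Real.norm_eq_abs]
    have hp1 : |p t| ≤ N := hNeq ▸ le_max_left _ _
    have hp2 : |p' t| ≤ N := hNeq ▸
      le_trans (le_max_left |p' t| |P t|) (le_max_right _ _)
    have hp3 : |P t| ≤ N := hNeq ▸
      le_trans (le_max_right |p' t| |P t|) (le_max_right _ _)
    -- bound on p''
    have heqt := heq t htI
    rw [hbd0] at heqt
    have he1t : e1 t * p'' t = -(e2 t * p' t + e3 t * p t + e4 t * P t) := by
      simp only [hPdef]; linarith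
    have habs : (-e1 t) * |p'' t| ≤ B2 * |p' t| + B3 * |p t| + B4 * |P t| := by
      have : |e1 t * p'' t| ≤ B2 * |p' t| + B3 * |p t| + B4 * |P t| := by
        rw [he1t, abs_neg]
        calc |e2 t * p' t + e3 t * p t + e4 t * P t|
            ≤ |e2 t * p' t| + |e3 t * p t| + |e4 t * P t| := by
              exact (abs_add_le _ _).trans (add_le_add (abs_add_le _ _) le_rfl)
          _ ≤ B2 * |p' t| + B3 * |p t| + B4 * |P t| := by
              have h2 : |e2 t| ≤ B2 := by simpa using hB2 t htI
              have h3 : |e3 t| ≤ B3 := by simpa using hB3 t htI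
              have h4 : |e4 t| ≤ B4 := by simpa using hB4 t htI
              rw [abs_mul, abs_mul, abs_mul]
              gcongr
      calc (-e1 t) * |p'' t| = |e1 t| * |p'' t| := by
            rw [abs_of_neg (he1neg t htI)]
        _ = |e1 t * p'' t| := (abs_mul _ _).symm
        _ ≤ _ := this
    have hmabs : m * |p'' t| ≤ B2 * |p' t| + B3 * |p t| + B4 * |P t| :=
      le_trans (mul_le_mul_of_nonneg_right (hme1 t htI) (abs_nonneg _)) habs
    have hpp : |p'' t| ≤ (B2 + B3 + B4) / m * N := by
      rw [div_mul_eq_mul_div, le_div_iff₀ hmpos]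
      nlinarith [mul_le_mul_of_nonneg_left hp2 hB2n, mul_le_mul_of_nonneg_left hp1 hB3n,
        mul_le_mul_of_nonneg_left hp3 hB4n]
    have hgt : |g t| ≤ Bb * N := by
      rw [hg]; simp only
      rw [abs_mul]
      calc |b t| * |p t| ≤ Bb * |p t| :=
            mul_le_mul_of_nonneg_right (by simpa using hBb t htI) (abs_nonneg _)
        _ ≤ Bb * N := mul_le_mul_of_nonneg_left hp1 hBbn
    have hKN : 0 ≤ (B2 + B3 + B4) / m := by positivity
    have : ‖f' t‖ ≤ K * N := by
      rw [hf']
      simp only [Prod.norm_def, Real.norm_eq_abs]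
      rw [hK]
      apply max_le
      · linarith [mul_nonneg hKN hNn, mul_nonneg hBbn hNn, hp2]
      apply max_le
      · linarith [mul_nonneg hBbn hNn, hNn, hpp]
      · linarith [mul_nonneg hKN hNn, hNn, hgt]
    rw [add_zero]
    exact this
  have := norm_le_gronwallBound_of_norm_deriv_right_le hfcont hfderiv hfa hbound
  intro x hx
  have hfx := this x hx
  rw [gronwallBound_ε0_δ0] at hfx
  have : ‖f x‖ = 0 := le_antisymm hfx (norm_nonneg _)
  have hcomp : |p x| ≤ ‖f x‖ := by
    simpa [hf, Prod.norm_def, Real.norm_eq_abs] using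
      (le_max_left |p x| (max |p' x| |P x|))
  rw [this] at hcomp
  exact abs_nonpos_iff.mp hcomp
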